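/- For α = 0, γ = 1 and V = e^u, the Ricci tensor of D^{0,1} equals the static Ricci tensor: Ric^{D^{0,1}} = Ric − (∇²V)/V + (ΔV/V) g. -/

import Mathlib

open scoped Manifold
open Finset Function MeasureTheory

variable {EE : Type*} [NormedAddCommGroup EE] [NormedSpace ℝ EE]
  {HM : Type*} [TopologicalSpace HM] {I : ModelWithCorners ℝ EE HM}
  {M : Type*} [TopologicalSpace M] [ChartedSpace HM M] [IsManifold I (⊤ : ℕ∞) M]

local notation "𝒞" => C^(⊤ : ℕ∞)⟮I, M; ℝ⟯
local notation "VF" => Derivation ℝ C^(⊤ : ℕ∞)⟮I, M; ℝ⟯ C^(⊤ : ℕ∞)⟮I, M; ℝ⟯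

/-- `D` is an affine connection on vector fields: additive and `𝒞`-linear in the
first slot, additive, `ℝ`-linear and Leibniz in the second slot. -/
def IsAffineConnection (D : VF → VF → VF) : Prop :=
  (∀ X Y Z, D (X + Y) Z = D X Z + D Y Z) ∧
  (∀ (f : 𝒞) X Y, D (f • X) Y = f • D X Y) ∧
  (∀ X Y Z, D X (Y + Z) = D X Y + D X Z) ∧
  (∀ (c : ℝ) X Y, D X (c • Y) = c • D X Y) ∧
  (∀ (f : 𝒞) X Y, D X (f • Y) = X f • Y + f • D X Y)

/-- `g` is a (symmetric, `𝒞`-bilinear) Riemannian metric pairing on vector fields. -/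
def IsMetric (g : VF → VF → 𝒞) : Prop :=
  (∀ X Y, g X Y = g Y X) ∧
  (∀ X Y Z, g (X + Y) Z = g X Z + g Y Z) ∧
  (∀ (f : 𝒞) X Y, g (f • X) Y = f * g X Y)

/-- `e` is a global orthonormal frame for `g`. -/
def IsONFrame {n : ℕ} (g : VF → VF → 𝒞) (e : Fin n → VF) : Prop :=
  (∀ i j, g (e i) (e j) = if i = j then 1 else 0) ∧
  (∀ X : VF, X = ∑ i, g X (e i) • e i)

/-- `D` is torsion-free. -/
def IsTorsionFree (D : VF → VF → VF) : Prop := ∀ X Y, D X Y - D Y X = ⁅X, Y⁆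

/-- `D` is compatible with the metric `g`. -/
def IsCompatible (g : VF → VF → 𝒞) (D : VF → VF → VF) : Prop :=
  ∀ X Y Z, X (g Y Z) = g (D X Y) Z + g Y (D X Z)

/-- Curvature operator `R^D(X,Y)Z = D_X D_Y Z - D_Y D_X Z - D_{[X,Y]} Z`. -/
noncomputable def Rcurv (D : VF → VF → VF) (X Y Z : VF) : VF := D X (D Y Z) - D Y (D X Z) - D ⁅X, Y⁆ Z

/-- Ricci tensor of `D`: the trace of `Z ↦ R^D(Z,X)Y`, computed via the orthonormal frame. -/
noncomputable def RicciT {n : ℕ} (g : VF → VF → 𝒞) (e : Fin n → VF) (D : VF → VF → VF) (X Y : VF) : 𝒞 :=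
  ∑ i, g (Rcurv D (e i) X Y) (e i)

/-- Hessian of a function with respect to a connection. -/
noncomputable def HessT (D : VF → VF → VF) (u : 𝒞) (X Y : VF) : 𝒞 := X (Y u) - (D X Y) u

/-- Laplacian of a function with respect to a connection (frame trace of the Hessian). -/
noncomputable def LapT {n : ℕ} (D : VF → VF → VF) (e : Fin n → VF) (u : 𝒞) : 𝒞 :=
  ∑ i, HessT D u (e i) (e i)

/-- Divergence of a vector field with respect to a connection (frame trace of `DY`). -/
noncomputable def divT {n : ℕ} (g : VF → VF → 𝒞) (e : Fin n → VF) (D : VF → VF → VF) (Y : VF) : 𝒞 :=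
  ∑ i, g (D (e i) Y) (e i)

/-- Second covariant derivative `D²X(V,W) = D_W (D_V X) - D_{D_W V} X`. -/
noncomputable def D2T (D : VF → VF → VF) (X V W : VF) : VF := D W (D V X) - D (D W V) X

set_option maxHeartbeats 1000000 in
/-- for `α = 0, γ = 1` and `V = e^u`, the Ricci tensor of `D^{0,1}` is the
static Ricci tensor `Ric - ∇²V/V + (ΔV/V) g`. -/
theorem ricci_of_static_connection {n : ℕ}
    (g : VF → VF → 𝒞) (hg : IsMetric g)
    (e : Fin n → VF) (he : IsONFrame g e)
    (LC : VF → VF → VF) (hLC : IsAffineConnection LC) (hLCtf : IsTorsionFree LC)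
    (hLCcompat : IsCompatible g LC)
    (u : 𝒞) (gradu : VF) (hgradu : ∀ X : VF, g gradu X = X u)
    (V : 𝒞) (hV : ∀ x : M, V x = Real.exp (u x))
    (hVder : ∀ X : VF, X V = V * X u)
    (D : VF → VF → VF)
    (hD : ∀ X Y, D X Y = LC X Y + g X Y • gradu) :
    ∀ (X Y : VF) (x : M),
      RicciT g e D X Y x
        = RicciT g e LC X Y x - HessT LC V X Y x / V x
          + (LapT LC e V x / V x) * g X Y x := by
  obtain ⟨gsymm, gaddl, gsmull⟩ := hg
  obtain ⟨LCadd1, LCsmul1, LCadd2, LCsmulR, LCleib⟩ := hLC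
  obtain ⟨heON, heexp⟩ := he
  -- basic metric lemmas
  have gzero : ∀ X : VF, g 0 X = 0 := by
    intro X
    have h : g 0 X = g 0 X + g 0 X := by
      have := gaddl 0 0 X; simpa using this
    exact left_eq_add.mp h
  have gsubl : ∀ X Y Z : VF, g (X - Y) Z = g X Z - g Y Z := by
    intro X Y Z
    have h := gaddl (X - Y) Y Z
    rw [sub_add_cancel] at h
    exact eq_sub_of_add_eq h.symm
  have gaddr : ∀ X Y Z : VF, g X (Y + Z) = g X Y + g X Z := by
    intro X Y Z; rw [gsymm, gaddl, gsymm Y X, gsymm Z X]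
  have gsmulr : ∀ (f : 𝒞) (X Y : VF), g X (f • Y) = f * g X Y := by
    intro f X Y; rw [gsymm, gsmull, gsymm Y X]
  have gsumr : ∀ (W : VF) (h : Fin n → VF), g W (∑ i, h i) = ∑ i, g W (h i) := by
    intro W h
    exact map_sum (AddMonoidHom.mk' (fun Z => g W Z) (fun a b => gaddr W a b)) h Finset.univ
  have gpair : ∀ W Y : VF, (∑ i, g W (e i) * g Y (e i)) = g W Y := by
    intro W Y
    conv_rhs => rw [heexp Y]
    rw [gsumr]
    exact Finset.sum_congr rfl fun i _ => by rw [gsmulr, mul_comm]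
  -- curvature expansion of D
  have hDexp : ∀ Z X Y : VF, Rcurv D Z X Y = Rcurv LC Z X Y
      + (g X Y * Z u - g Z Y * X u) • gradu
      + g X Y • LC Z gradu - g Z Y • LC X gradu := by
    intro Z X Y
    have e1 : ∀ P Q R : VF, D P (LC Q R + g Q R • gradu)
        = LC P (LC Q R) + (P (g Q R) + g P (LC Q R) + g Q R * P u) • gradu
          + g Q R • LC P gradu := by
      intro P Q R
      have hPG : g P gradu = P u := by rw [gsymm]; exact hgradu P
      rw [hD, LCadd2, LCleib, gaddr, gsmulr, hPG]
      module
    have hc : Z (g X Y) + g Z (LC X Y) - X (g Z Y) - g X (LC Z Y)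
        - g ⁅Z, X⁆ Y = 0 := by
      rw [hLCcompat Z X Y, hLCcompat X Z Y, ← hLCtf Z X, gsubl]; ring
    show D Z (D X Y) - D X (D Z Y) - D ⁅Z, X⁆ Y = _
    rw [hD X Y, hD Z Y, e1 Z X Y, e1 X Z Y, hD ⁅Z, X⁆ Y]
    show _ = (LC Z (LC X Y) - LC X (LC Z Y) - LC ⁅Z, X⁆ Y)
      + (g X Y * Z u - g Z Y * X u) • gradu
      + g X Y • LC Z gradu - g Z Y • LC X gradu
    match_scalars <;> first
      | ring1
      | linear_combination hc
      | linear_combination -hc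
  -- frame sums
  have hs1 : (∑ i, (e i) u * (e i) u) = gradu u := by
    have h := gpair gradu gradu
    simp only [hgradu] at h
    exact h
  have hs2 : ∀ Y : VF, (∑ i, g (e i) Y * (e i) u) = Y u := by
    intro Y
    have h := gpair Y gradu
    simp only [hgradu] at h
    rw [gsymm Y gradu, hgradu] at h
    rw [← h]
    exact Finset.sum_congr rfl fun i _ => by rw [gsymm (e i) Y]
  have hs3 : ∀ W Y : VF, (∑ i, g (e i) Y * g W (e i)) = g W Y := by
    intro W Y
    rw [← gpair W Y]
    exact Finset.sum_congr rfl fun i _ => by rw [gsymm (e i) Y, mul_comm]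
  -- Ricci expansion
  have hterm : ∀ (X Y : VF) (i : Fin n),
      g (Rcurv D (e i) X Y) (e i)
        = g (Rcurv LC (e i) X Y) (e i)
          + (g X Y * (e i) u - g (e i) Y * X u) * (e i) u
          + g X Y * g (LC (e i) gradu) (e i)
          - g (e i) Y * g (LC X gradu) (e i) := by
    intro X Y i
    rw [hDexp, gsubl, gaddl, gaddl, gsmull, gsmull, gsmull, hgradu]
  have hRic : ∀ X Y : VF, RicciT g e D X Y
      = RicciT g e LC X Y + g X Y * gradu u - X u * Y u
        + g X Y * divT g e LC gradu - g (LC X gradu) Y := by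
    intro X Y
    unfold RicciT
    rw [Finset.sum_congr rfl fun i _ => hterm X Y i]
    rw [Finset.sum_sub_distrib, Finset.sum_add_distrib, Finset.sum_add_distrib]
    have t1 : (∑ i, (g X Y * (e i) u - g (e i) Y * X u) * (e i) u)
        = g X Y * gradu u - X u * Y u := by
      rw [Finset.sum_congr rfl (fun i _ => sub_mul (g X Y * (e i) u) (g (e i) Y * X u) ((e i) u)),
        Finset.sum_sub_distrib]
      congr 1
      · rw [show (∑ i, g X Y * (e i) u * (e i) u) = g X Y * ∑ i, (e i) u * (e i) u by
          rw [Finset.mul_sum]; exact Finset.sum_congr rfl fun i _ => by ring, hs1]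
      · rw [show (∑ i, g (e i) Y * X u * (e i) u) = X u * ∑ i, g (e i) Y * (e i) u by
          rw [Finset.mul_sum]; exact Finset.sum_congr rfl fun i _ => by ring, hs2 Y]
    have t2 : (∑ i, g X Y * g (LC (e i) gradu) (e i)) = g X Y * divT g e LC gradu := by
      rw [divT, Finset.mul_sum]
    have t3 : (∑ i, g (e i) Y * g (LC X gradu) (e i)) = g (LC X gradu) Y := hs3 _ Y
    rw [t1, t2, t3]
    ring
  -- Hessian and Laplacian of V
  have hHu : ∀ X Y : VF, g (LC X gradu) Y = HessT LC u X Y := by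
    intro X Y
    have h := hLCcompat X gradu Y
    rw [hgradu Y, hgradu (LC X Y)] at h
    show _ = X (Y u) - (LC X Y) u
    rw [h]; ring
  have hHV : ∀ X Y : VF, HessT LC V X Y = V * (HessT LC u X Y + X u * Y u) := by
    intro X Y
    show X (Y V) - (LC X Y) V = _
    rw [hVder Y, hVder (LC X Y), Derivation.leibniz, smul_eq_mul, smul_eq_mul, hVder X]
    show _ = V * ((X (Y u) - (LC X Y) u) + X u * Y u)
    ring
  have hLapV : LapT LC e V = V * (divT g e LC gradu + gradu u) := by
    have hdiv : divT g e LC gradu = ∑ i, HessT LC u (e i) (e i) :=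
      Finset.sum_congr rfl fun i _ => hHu (e i) (e i)
    unfold LapT
    rw [Finset.sum_congr rfl fun i _ => hHV (e i) (e i)]
    simp only [mul_add, Finset.sum_add_distrib, ← Finset.mul_sum]
    rw [hdiv, hs1]
  -- pointwise conclusion
  intro X Y x
  have hVx : V x ≠ 0 := by rw [hV x]; exact (Real.exp_pos _).ne'
  have h1 := congrArg (fun f : 𝒞 => f x) (hRic X Y)
  have h2 := congrArg (fun f : 𝒞 => f x) (hHV X Y)
  have h3 := congrArg (fun f : 𝒞 => f x) hLapV
  have h4 := congrArg (fun f : 𝒞 => f x) (hHu X Y)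
  simp only [ContMDiffMap.coe_add, ContMDiffMap.coe_sub, ContMDiffMap.coe_mul, Pi.add_apply,
    Pi.sub_apply, Pi.mul_apply] at h1 h2 h3 h4
  rw [h1, h2, h3, ← h4]
  field_simp
  ring
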